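/- Let Ω ⊆ ℝⁿ be an open set, f : ℝ → ℝ continuous, and q ∈ (0,1). Let v : Ω → ℝ be continuous with v > 0 in Ω, and suppose v is a viscosity supersolution of min{|∇w| − f(w), −Δ_∞ w} = 0 in Ω. Then the function ṽ := v^{1−q} is a viscosity supersolution of min{ |∇w̃| − (1−q) f(w̃^{1/(1−q)}) / w̃^{q/(1−q)}, −Δ_∞ w̃ − (q/(1−q)) |∇w̃|⁴ / w̃ } = 0 in every open set U whose closure is compact and contained in Ω. -/

import Mathlib

open Real Set Metric Filter Topology

/-- `⟨D²φ(x)∇φ(x), ∇φ(x)⟩`, i.e. `Δ_∞φ(x)`. -/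
noncomputable def hessQ {n : ℕ} (φ : EuclideanSpace ℝ (Fin n) → ℝ)
    (x : EuclideanSpace ℝ (Fin n)) : ℝ :=
  iteratedFDeriv ℝ 2 φ x ![gradient φ x, gradient φ x]

/-- Viscosity supersolution of `min{|∇w| − f(w), −Δ_∞ w} = 0` in `Ω`. -/
def IsFSuper {n : ℕ} (Ω : Set (EuclideanSpace ℝ (Fin n))) (f : ℝ → ℝ)
    (w : EuclideanSpace ℝ (Fin n) → ℝ) : Prop :=
  ∀ x₀ ∈ Ω, ∀ φ : EuclideanSpace ℝ (Fin n) → ℝ, ContDiff ℝ 2 φ →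
    IsLocalMinOn (fun x => w x - φ x) Ω x₀ →
    (0 ≤ ‖gradient φ x₀‖ - f (w x₀) ∧ 0 ≤ -(hessQ φ x₀))

/-- Viscosity subsolution of `min{|∇w| − f(w), −Δ_∞ w} = 0` in `Ω`. -/
def IsFSub {n : ℕ} (Ω : Set (EuclideanSpace ℝ (Fin n))) (f : ℝ → ℝ)
    (w : EuclideanSpace ℝ (Fin n) → ℝ) : Prop :=
  ∀ x₀ ∈ Ω, ∀ φ : EuclideanSpace ℝ (Fin n) → ℝ, ContDiff ℝ 2 φ →
    IsLocalMaxOn (fun x => w x - φ x) Ω x₀ →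
    min (‖gradient φ x₀‖ - f (w x₀)) (-(hessQ φ x₀)) ≤ 0

/-- Viscosity supersolution of the transformed equation
`min{ |∇w̃| − (1−q) f(w̃^{1/(1−q)})/w̃^{q/(1−q)}, −Δ_∞ w̃ − (q/(1−q))|∇w̃|⁴/w̃ } = 0` in `U`. -/
def IsTransfSuper {n : ℕ} (U : Set (EuclideanSpace ℝ (Fin n))) (f : ℝ → ℝ) (q : ℝ)
    (w : EuclideanSpace ℝ (Fin n) → ℝ) : Prop :=
  ∀ x₀ ∈ U, ∀ φ : EuclideanSpace ℝ (Fin n) → ℝ, ContDiff ℝ 2 φ →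
    IsLocalMinOn (fun x => w x - φ x) U x₀ →
    (0 ≤ ‖gradient φ x₀‖ - (1 - q) * f (w x₀ ^ (1 / (1 - q))) / w x₀ ^ (q / (1 - q)) ∧
     0 ≤ -(hessQ φ x₀) - (q / (1 - q)) * ‖gradient φ x₀‖ ^ 4 / w x₀)

section AuxLemmas

variable {n : ℕ}

local notation "E" => EuclideanSpace ℝ (Fin n)

lemma chain_rule_rpow {φ : E → ℝ} (hφ : ContDiff ℝ 2 φ)
    (p : ℝ) {x₀ : E} (h0 : 0 < φ x₀) :
    fderiv ℝ (fun x => φ x ^ p) x₀ = (p * φ x₀ ^ (p - 1)) • fderiv ℝ φ x₀ ∧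
    ∀ u : E,
      fderiv ℝ (fderiv ℝ (fun x => φ x ^ p)) x₀ u u =
        p * (p - 1) * φ x₀ ^ (p - 2) * (fderiv ℝ φ x₀ u) ^ 2
          + p * φ x₀ ^ (p - 1) * fderiv ℝ (fderiv ℝ φ) x₀ u u := by
  have hφd : Differentiable ℝ φ := hφ.differentiable two_ne_zero
  have key : ∀ x : E, 0 < φ x →
      HasFDerivAt (fun y => φ y ^ p) ((p * φ x ^ (p - 1)) • fderiv ℝ φ x) x := by
    intro x hx
    exact (Real.hasDerivAt_rpow_const (Or.inl hx.ne')).comp_hasFDerivAt x (hφd x).hasFDerivAt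
  refine ⟨(key x₀ h0).fderiv, ?_⟩
  have hev : fderiv ℝ (fun x => φ x ^ p) =ᶠ[𝓝 x₀]
      fun x => (p * φ x ^ (p - 1)) • fderiv ℝ φ x := by
    have hop : IsOpen {x : E | 0 < φ x} := isOpen_lt continuous_const hφ.continuous
    filter_upwards [hop.mem_nhds h0] with x hx
    exact (key x hx).fderiv
  intro u
  rw [hev.fderiv_eq]
  have h1 : HasDerivAt (fun t : ℝ => p * t ^ (p - 1))
      (p * ((p - 1) * φ x₀ ^ (p - 2))) (φ x₀) := by
    have := (Real.hasDerivAt_rpow_const (x := φ x₀) (p := p - 1) (Or.inl h0.ne')).const_mul p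
    rwa [show p - 1 - 1 = p - 2 by ring] at this
  have ha : HasFDerivAt (fun x => p * φ x ^ (p - 1))
      ((p * ((p - 1) * φ x₀ ^ (p - 2))) • fderiv ℝ φ x₀) x₀ :=
    h1.comp_hasFDerivAt x₀ (hφd x₀).hasFDerivAt
  have hL : HasFDerivAt (fderiv ℝ φ) (fderiv ℝ (fderiv ℝ φ) x₀) x₀ := by
    have hd : Differentiable ℝ (fderiv ℝ φ) :=
      (hφ.fderiv_right (m := 1) (by norm_num)).differentiable one_ne_zero
    exact (hd x₀).hasFDerivAt
  rw [show (fun x => (p * φ x ^ (p - 1)) • fderiv ℝ φ x) = (fun x => p * φ x ^ (p - 1)) • fderiv ℝ φ from rfl, (ha.smul hL).fderiv]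
  simp only [ContinuousLinearMap.add_apply, ContinuousLinearMap.smul_apply,
    ContinuousLinearMap.smulRight_apply, smul_eq_mul]
  ring

lemma gradient_of_smul_fderiv {ψ φ : E → ℝ} {x : E} {c : ℝ}
    (h : fderiv ℝ ψ x = c • fderiv ℝ φ x) :
    gradient ψ x = c • gradient φ x := by
  unfold gradient
  rw [h]
  simp

lemma fderiv_apply_inner {φ : E → ℝ} {x u : E} :
    fderiv ℝ φ x u = inner ℝ (gradient φ x) u := by
  unfold gradient
  rw [InnerProductSpace.toDual_symm_apply]

lemma hessQ_eq_fderiv_fderiv (φ : E → ℝ) (x : E) :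
    hessQ φ x = fderiv ℝ (fderiv ℝ φ) x (gradient φ x) (gradient φ x) := by
  rw [hessQ, iteratedFDeriv_two_apply]
  simp

end AuxLemmas

set_option maxHeartbeats 1000000 in
/-- If `v > 0` is a viscosity supersolution of
`min{|∇w| − f(w), −Δ_∞ w} = 0` in `Ω`, then `ṽ = v^{1−q}` is a viscosity
supersolution of the transformed equation in every open `U` compactly contained
in `Ω`. -/
theorem change_of_variables_supersolution {n : ℕ} (Ω : Set (EuclideanSpace ℝ (Fin n)))
    (hΩo : IsOpen Ω) (f : ℝ → ℝ) (hf : Continuous f)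
    (q : ℝ) (hq : q ∈ Set.Ioo (0:ℝ) 1)
    (v : EuclideanSpace ℝ (Fin n) → ℝ)
    (hv_cont : ContinuousOn v Ω) (hv_pos : ∀ x ∈ Ω, 0 < v x)
    (hv_super : IsFSuper Ω f v) :
    ∀ U : Set (EuclideanSpace ℝ (Fin n)), IsOpen U → IsCompact (closure U) →
      closure U ⊆ Ω → IsTransfSuper U f q (fun x => v x ^ (1 - q)) := by
  intro U hUo _hUc hUΩ x₀ hx₀ φ hφ hmin
  have hx₀Ω : x₀ ∈ Ω := hUΩ (subset_closure hx₀)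
  have hq1 : 0 < 1 - q := by linarith [hq.2]
  have hv₀ : 0 < v x₀ := hv_pos x₀ hx₀Ω
  set p : ℝ := 1 / (1 - q) with hp_def
  have hp0 : 0 < p := by positivity
  have hpq : p - 1 = q / (1 - q) := by
    rw [hp_def]; field_simp; ring
  set s : ℝ := v x₀ ^ (1 - q) with hs_def
  have hs : 0 < s := Real.rpow_pos_of_pos hv₀ _
  have hsp : s ^ p = v x₀ := by
    rw [hs_def, ← Real.rpow_mul hv₀.le, mul_one_div_cancel hq1.ne', Real.rpow_one]
  -- shifted test function φ̂ = φ + c touching ṽ from below at x₀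
  set c : ℝ := s - φ x₀ with hc_def
  set φ₁ : EuclideanSpace ℝ (Fin n) → ℝ := fun x => φ x + c with hφ₁_def
  have hφ₁ : ContDiff ℝ 2 φ₁ := hφ.add contDiff_const
  have hφ₁x₀ : φ₁ x₀ = s := by simp [hφ₁_def, hc_def]
  -- eventual properties near x₀
  have hminev : ∀ᶠ x in 𝓝 x₀, c ≤ v x ^ (1 - q) - φ x := by
    have h1 : ∀ᶠ x in 𝓝[U] x₀, c ≤ v x ^ (1 - q) - φ x := by
      have := (hmin : ∀ᶠ x in 𝓝[U] x₀,
        (fun x => v x ^ (1 - q) - φ x) x₀ ≤ (fun x => v x ^ (1 - q) - φ x) x)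
      filter_upwards [this] with x hx
      simpa [hc_def, hs_def] using hx
    rwa [nhdsWithin_eq_nhds.2 (hUo.mem_nhds hx₀)] at h1
  have hposev : ∀ᶠ x in 𝓝 x₀, 0 < φ₁ x :=
    (isOpen_lt continuous_const hφ₁.continuous).mem_nhds
      (by show 0 < φ₁ x₀; rw [hφ₁x₀]; exact hs)
  have hUev : ∀ᶠ x in 𝓝 x₀, x ∈ U := hUo.mem_nhds hx₀
  obtain ⟨r, hr0, hrP⟩ := Metric.eventually_nhds_iff_ball.1 (hminev.and (hposev.and hUev))
  -- the bump function
  set χ : ContDiffBump x₀ :=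
    { rIn := r / 2, rOut := 3 * r / 4,
      rIn_pos := by linarith, rIn_lt_rOut := by linarith } with hχ_def
  have hχ_out : χ.rOut = 3 * r / 4 := rfl
  have hχ_in : χ.rIn = r / 2 := rfl
  -- the test function for v
  set ψ : EuclideanSpace ℝ (Fin n) → ℝ := fun x => χ x * φ₁ x ^ p with hψ_def
  have hψF : ψ =ᶠ[𝓝 x₀] (fun x => φ₁ x ^ p) := by
    filter_upwards [ball_mem_nhds x₀ (by linarith : (0:ℝ) < r / 2)] with x hx
    have : χ x = 1 := χ.one_of_mem_closedBall (ball_subset_closedBall hx)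
    simp [hψ_def, this]
  have hψC : ContDiff ℝ 2 ψ := by
    rw [contDiff_iff_contDiffAt]
    intro x
    by_cases hx : x ∈ ball x₀ r
    · exact χ.contDiff.contDiffAt.mul
        ((Real.contDiffAt_rpow_const_of_ne (hrP x hx).2.1.ne').comp x hφ₁.contDiffAt)
    · have hx' : x ∉ tsupport (χ : EuclideanSpace ℝ (Fin n) → ℝ) := by
        rw [χ.tsupport_eq]
        intro hmem
        exact hx (lt_of_le_of_lt (mem_closedBall.1 hmem) (by rw [hχ_out]; linarith))
      have hev0 : ψ =ᶠ[𝓝 x] fun _ => (0:ℝ) := by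
        filter_upwards [(isOpen_compl_iff.2 (isClosed_tsupport _)).mem_nhds hx'] with y hy
        simp [hψ_def, image_eq_zero_of_notMem_tsupport hy]
      exact contDiffAt_const.congr_of_eventuallyEq hev0
  have hψx₀ : ψ x₀ = v x₀ := by
    have h1 : χ x₀ = 1 := χ.one_of_mem_closedBall (mem_closedBall_self (by rw [hχ_in]; linarith))
    rw [hψ_def]
    simp only [h1, one_mul, hφ₁x₀, hsp]
  -- ψ touches v from below at x₀ in Ω
  have hminΩ : IsLocalMinOn (fun x => v x - ψ x) Ω x₀ := by
    show ∀ᶠ x in 𝓝[Ω] x₀, (fun x => v x - ψ x) x₀ ≤ (fun x => v x - ψ x) x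
    have hball : ball x₀ (r / 2) ∈ 𝓝[Ω] x₀ :=
      mem_nhdsWithin_of_mem_nhds (ball_mem_nhds x₀ (by linarith))
    filter_upwards [hball, self_mem_nhdsWithin] with x hxb hxΩ
    have hxr : x ∈ ball x₀ r := ball_subset_ball (by linarith) hxb
    obtain ⟨hle, hpos, _⟩ := hrP x hxr
    have hχ1 : χ x = 1 := χ.one_of_mem_closedBall (ball_subset_closedBall hxb)
    have hψx : ψ x = φ₁ x ^ p := by simp [hψ_def, hχ1]
    have hφ₁le : φ₁ x ≤ v x ^ (1 - q) := by
      have : φ x + c ≤ v x ^ (1 - q) := by linarith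
      simpa [hφ₁_def] using this
    have hmono : φ₁ x ^ p ≤ (v x ^ (1 - q)) ^ p :=
      Real.rpow_le_rpow hpos.le hφ₁le hp0.le
    have hvx : (v x ^ (1 - q)) ^ p = v x := by
      rw [← Real.rpow_mul (hv_pos x hxΩ).le, mul_one_div_cancel hq1.ne', Real.rpow_one]
    simp only [hψx₀, hψx]
    rw [sub_self]
    linarith [hvx ▸ hmono]
  obtain ⟨h1, h2⟩ := hv_super x₀ hx₀Ω ψ hψC hminΩ
  -- chain rule computations
  have hφ₁pos : 0 < φ₁ x₀ := by rw [hφ₁x₀]; exact hs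
  obtain ⟨hfd1, hfd2⟩ := chain_rule_rpow hφ₁ p hφ₁pos
  set c₁ : ℝ := p * s ^ (p - 1) with hc₁_def
  have hc₁ : 0 < c₁ := by
    have := Real.rpow_pos_of_pos hs (p - 1)
    positivity
  have hfφ₁ : fderiv ℝ φ₁ = fderiv ℝ φ := by
    funext x
    exact fderiv_add_const c
  have hgradφ₁ : gradient φ₁ x₀ = gradient φ x₀ := by
    unfold gradient; rw [hfφ₁]
  set w : EuclideanSpace ℝ (Fin n) := gradient φ x₀ with hw_def
  have hgradF : gradient (fun x => φ₁ x ^ p) x₀ = c₁ • w := by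
    rw [← hgradφ₁]
    exact gradient_of_smul_fderiv (by rw [hφ₁x₀] at hfd1; exact hfd1)
  have hgradψ : gradient ψ x₀ = c₁ • w := by rw [hψF.gradient_eq, hgradF]
  have hnormψ : ‖gradient ψ x₀‖ = c₁ * ‖w‖ := by
    rw [hgradψ, norm_smul, Real.norm_eq_abs, abs_of_pos hc₁]
  have hveq : (fun x => v x ^ (1 - q)) x₀ = s := rfl
  have ht : (0:ℝ) < s ^ (p - 1) := Real.rpow_pos_of_pos hs _
  have hqp : (1 - q) * p = 1 := by
    rw [hp_def]; field_simp
  constructor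
  · -- first inequality
    have hfle : f (v x₀) ≤ c₁ * ‖w‖ := by
      have h1' := h1
      rw [hnormψ] at h1'
      linarith
    simp only [hveq]
    rw [hsp, ← hpq, sub_nonneg, div_le_iff₀ ht]
    calc (1 - q) * f (v x₀) ≤ (1 - q) * (c₁ * ‖w‖) := by nlinarith [hfle, hq1]
      _ = ((1 - q) * p) * (s ^ (p - 1) * ‖w‖) := by rw [hc₁_def]; ring
      _ = ‖w‖ * s ^ (p - 1) := by rw [hqp]; ring
  · -- second inequality
    have e1 : fderiv ℝ φ₁ x₀ (c₁ • w) = c₁ * ‖w‖ ^ 2 := by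
      rw [hfφ₁, fderiv_apply_inner, ← hw_def, real_inner_smul_right,
        real_inner_self_eq_norm_sq]
    have e2 : fderiv ℝ (fderiv ℝ φ₁) x₀ (c₁ • w) (c₁ • w) = c₁ * c₁ * hessQ φ x₀ := by
      rw [hfφ₁, hessQ_eq_fderiv_fderiv, ← hw_def, map_smul]
      simp only [ContinuousLinearMap.coe_smul', Pi.smul_apply, map_smul, smul_eq_mul]
      ring
    have e3 : fderiv ℝ (fderiv ℝ ψ) x₀ = fderiv ℝ (fderiv ℝ (fun x => φ₁ x ^ p)) x₀ :=
      (hψF.fderiv).fderiv_eq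
    have hhessψ : hessQ ψ x₀ =
        p * (p - 1) * s ^ (p - 2) * (c₁ * ‖w‖ ^ 2) ^ 2
          + p * s ^ (p - 1) * (c₁ * c₁ * hessQ φ x₀) := by
      rw [hessQ_eq_fderiv_fderiv, hgradψ, e3, hfd2 (c₁ • w), hφ₁x₀, e1, e2]
    simp only [hveq]
    rw [← hpq]
    have hs2 : s ^ (p - 2) = s ^ (p - 1) / s := by
      rw [show p - 2 = p - 1 - 1 by ring, Real.rpow_sub hs, Real.rpow_one]
    set t : ℝ := s ^ (p - 1) with ht_def
    have htpos : 0 < t := ht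
    rw [hhessψ, hs2, hc₁_def] at h2
    set N : ℝ := ‖w‖ with hN_def
    set H : ℝ := hessQ φ x₀ with hH_def
    have key : H + (p - 1) * N ^ 4 / s ≤ 0 := by
      have hexp : p * (p - 1) * (t / s) * (p * t * N ^ 2) ^ 2
          + p * t * (p * t * (p * t) * H)
          = (p ^ 3 * t ^ 3) * (H + (p - 1) * N ^ 4 / s) := by
        field_simp
        ring
      rw [hexp] at h2
      nlinarith [mul_pos (mul_pos (mul_pos hp0 hp0) hp0)
        (mul_pos (mul_pos htpos htpos) htpos), h2]
    linarith [key]
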